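/- (Measurable Projection Theorem) Let (Ω, F, ℙ) be a complete probability space. For every set S ∈ F ⊗ B(ℝ₊), the projection π_Ω(S) belongs to F. -/

import Mathlib

open MeasureTheory Set
open scoped NNReal ENNReal

open Filter Topology in
/-- Inner regularity by compacts for continuous images of Baire space. -/
lemma inner_compact {X : Type*} [TopologicalSpace X] [PolishSpace X]
    [MeasurableSpace X] [BorelSpace X] (μ : Measure X) [IsFiniteMeasure μ]
    (f : (ℕ → ℕ) → X) (hf : Continuous f) {ε : ℝ≥0∞} (hε : 0 < ε) :
    ∃ K, K ⊆ range f ∧ IsCompact K ∧ μ (range f) ≤ μ K + ε := by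
  by_cases hsmall : μ (range f) ≤ ε
  · exact ⟨∅, empty_subset _, isCompact_empty, by simpa using hsmall⟩
  push_neg at hsmall
  set A := range f with hA
  have hAtop : μ A ≠ ⊤ := measure_ne_top μ A
  have key : μ A - ε < μ A :=
    ENNReal.sub_lt_self hAtop (fun h => by simp [h] at hsmall) hε.ne'
  -- the choice function
  classical
  let Φ : (ℕ → ℕ) → ℕ → ℕ := fun c k =>
    if h : ∃ m, μ A - ε < μ (f '' {x | (∀ i < k, x i ≤ c i) ∧ x k ≤ m}) then h.choose else 0
  let g : ℕ → (ℕ → ℕ) := fun k =>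
    Nat.rec (motive := fun _ => ℕ → ℕ) (fun _ => 0)
      (fun k ck => Function.update ck k (Φ ck k)) k
  have hg0 : g 0 = fun _ => 0 := rfl
  have hgsucc : ∀ k, g (k + 1) = Function.update (g k) k (Φ (g k) k) := fun k => rfl
  have stab : ∀ k i, i < k → g k i = g (i + 1) i := by
    intro k
    induction k with
    | zero => intro i hi; omega
    | succ k ih =>
      intro i hi
      rcases Nat.lt_succ_iff_lt_or_eq.1 hi with h | rfl
      · rw [hgsucc, Function.update_of_ne (by omega), ih i h]
      · rfl
  set b : ℕ → ℕ := fun i => g (i + 1) i with hb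
  have hNb : ∀ k (x : ℕ → ℕ), (∀ i < k, x i ≤ b i) ↔ (∀ i < k, x i ≤ g k i) := by
    intro k x
    constructor <;> intro h i hi
    · rw [stab k i hi]; exact h i hi
    · show x i ≤ g (i + 1) i
      rw [← stab k i hi]; exact h i hi
  -- invariant
  have inv : ∀ k, μ A - ε < μ (f '' {x | ∀ i < k, x i ≤ g k i}) := by
    intro k
    induction k with
    | zero => simpa using key
    | succ k ih =>
      set E : ℕ → Set (ℕ → ℕ) := fun m => {x | (∀ i < k, x i ≤ g k i) ∧ x k ≤ m} with hE
      have hmono : Monotone fun m => f '' E m := by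
        intro m m' hmm'
        exact Set.image_mono (fun x hx => ⟨hx.1, hx.2.trans hmm'⟩)
      have hU' : (⋃ m, E m) = {x : ℕ → ℕ | ∀ i < k, x i ≤ g k i} := by
        ext x
        simp only [mem_iUnion, hE, mem_setOf_eq]
        exact ⟨fun ⟨m, hm⟩ => hm.1, fun h => ⟨x k, h, le_rfl⟩⟩
      have hUnion : (⋃ m, f '' E m) = f '' {x | ∀ i < k, x i ≤ g k i} := by
        rw [← image_iUnion, hU']
      have hsup : μ A - ε < ⨆ m, μ (f '' E m) := by
        rw [← hmono.directed_le.measure_iUnion, hUnion]; exact ih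
      obtain ⟨m, hm⟩ := lt_iSup_iff.1 hsup
      have hex : ∃ m, μ A - ε < μ (f '' {x | (∀ i < k, x i ≤ g k i) ∧ x k ≤ m}) := ⟨m, hm⟩
      have hΦ : μ A - ε < μ (f '' E (Φ (g k) k)) := by
        simpa only [Φ, dif_pos hex] using hex.choose_spec
      have heq : {x : ℕ → ℕ | ∀ i < k + 1, x i ≤ g (k + 1) i} = E (Φ (g k) k) := by
        ext x
        simp only [hE, mem_setOf_eq, hgsucc]
        constructor
        · intro h
          refine ⟨fun i hi => ?_, ?_⟩
          · have := h i (by omega); rwa [Function.update_of_ne (by omega)] at this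
          · have := h k (by omega); rwa [Function.update_self] at this
        · rintro ⟨h1, h2⟩ i hi
          rcases Nat.lt_succ_iff_lt_or_eq.1 hi with h | rfl
          · rw [Function.update_of_ne (by omega)]; exact h1 i h
          · rwa [Function.update_self]
      rw [heq]; exact hΦ
  -- the compact set
  refine ⟨f '' univ.pi fun i => Iic (b i), image_subset_range _ _,
    (isCompact_univ_pi fun i => (Set.finite_Iic _).isCompact).image hf, ?_⟩
  -- intersection of closures is inside K
  letI := TopologicalSpace.upgradeIsCompletelyMetrizable X
  have hsub : (⋂ k, closure (f '' {x | ∀ i < k, x i ≤ b i})) ⊆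
      f '' univ.pi fun i => Iic (b i) := by
    intro y hy
    simp only [mem_iInter] at hy
    have hx : ∀ k : ℕ, ∃ z, (∀ i < k + 1, z i ≤ b i) ∧ dist y (f z) < 1 / (k + 1) := by
      intro k
      have := hy (k + 1)
      rw [Metric.mem_closure_iff] at this
      obtain ⟨w, hw, hd⟩ := this (1 / (k + 1)) (by positivity)
      obtain ⟨z, hz, rfl⟩ := hw
      exact ⟨z, hz, hd⟩
    choose x hxN hxd using hx
    set M : ℕ → ℕ := fun i => max (b i) ((Finset.range i).sup fun k => x k i) with hM
    have hxM : ∀ k, x k ∈ univ.pi fun i => Iic (M i) := by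
      intro k i _
      simp only [mem_Iic, hM]
      rcases le_or_gt i k with h | h
      · exact le_max_of_le_left (hxN k i (by omega))
      · exact le_max_of_le_right (Finset.le_sup (f := fun k => x k i) (Finset.mem_range.2 h))
    obtain ⟨a, ha, φ, hφ, htend⟩ :=
      (isCompact_univ_pi fun i => (Set.finite_Iic (M i)).isCompact).tendsto_subseq hxM
    have haB : a ∈ univ.pi fun i => Iic (b i) := by
      intro i _
      have hcoord : Tendsto (fun j => x (φ j) i) atTop (𝓝 (a i)) :=
        ((continuous_apply i).tendsto a).comp htend
      rw [nhds_discrete, tendsto_pure] at hcoord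
      have h2 : ∀ᶠ j in atTop, i ≤ φ j :=
        eventually_atTop.2 ⟨i, fun j hj => hj.trans hφ.le_apply⟩
      obtain ⟨j, hj1, hj2⟩ := (hcoord.and h2).exists
      rw [mem_Iic, ← hj1]
      exact hxN (φ j) i (by omega)
    refine ⟨a, haB, ?_⟩
    have h1 : Tendsto (fun j => f (x (φ j))) atTop (𝓝 (f a)) :=
      (hf.tendsto a).comp htend
    have h2 : Tendsto (fun j => f (x (φ j))) atTop (𝓝 y) := by
      rw [tendsto_iff_dist_tendsto_zero]
      apply squeeze_zero (fun j => dist_nonneg) (fun j => ?_)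
        tendsto_one_div_add_atTop_nhds_zero_nat
      rw [dist_comm]
      refine (hxd (φ j)).le.trans ?_
      apply one_div_le_one_div_of_le (by positivity)
      exact_mod_cast Nat.succ_le_succ hφ.le_apply
    exact tendsto_nhds_unique h1 h2
  -- measure estimate
  have hDanti : Antitone fun k => closure (f '' {x | ∀ i < k, x i ≤ b i}) := by
    intro k k' hk
    exact closure_mono (Set.image_mono (fun x hx i hi => hx i (by omega)))
  have hDmeas : ∀ k, NullMeasurableSet (closure (f '' {x | ∀ i < k, x i ≤ b i})) μ :=
    fun k => isClosed_closure.measurableSet.nullMeasurableSet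
  have hiInf : μ (⋂ k, closure (f '' {x | ∀ i < k, x i ≤ b i}))
      = ⨅ k, μ (closure (f '' {x | ∀ i < k, x i ≤ b i})) :=
    (hDanti.directed_ge).measure_iInter hDmeas ⟨0, measure_ne_top μ _⟩
  have hlow : μ A - ε ≤ μ (⋂ k, closure (f '' {x | ∀ i < k, x i ≤ b i})) := by
    rw [hiInf]
    refine le_iInf fun k => ?_
    refine le_trans (le_of_lt ?_) (measure_mono subset_closure)
    have := inv k
    have heq : {x : ℕ → ℕ | ∀ i < k, x i ≤ b i} = {x | ∀ i < k, x i ≤ g k i} := by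
      ext x; exact hNb k x
    rw [heq]; exact this
  have : μ A - ε ≤ μ (f '' univ.pi fun i => Iic (b i)) :=
    hlow.trans (measure_mono hsub)
  exact tsub_le_iff_right.1 this

lemma analyticSet_nullMeasurableSet {X : Type*} [TopologicalSpace X] [PolishSpace X]
    [MeasurableSpace X] [BorelSpace X] (μ : Measure X) [IsFiniteMeasure μ]
    {A : Set X} (hA : AnalyticSet A) : NullMeasurableSet A μ := by
  rw [AnalyticSet_def] at hA
  rcases hA with rfl | ⟨f, hf, rfl⟩
  · exact NullMeasurableSet.of_null measure_empty
  have hK : ∀ n : ℕ, ∃ K, K ⊆ range f ∧ IsCompact K ∧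
      μ (range f) ≤ μ K + ((n : ℝ≥0∞))⁻¹ := by
    intro n
    rcases eq_or_ne (n : ℝ≥0∞)⁻¹ 0 with h | h
    ·
      simp [ENNReal.inv_eq_zero] at h
    · exact inner_compact μ f hf (pos_iff_ne_zero.2 h)
  choose K hKsub hKc hKle using hK
  set C := ⋃ n, K n with hC
  have hCmeas : MeasurableSet C :=
    MeasurableSet.iUnion fun n => (hKc n).isClosed.measurableSet
  have hCA : C ⊆ range f := iUnion_subset hKsub
  have hle : μ (range f) ≤ μ C := by
    refine ENNReal.le_of_forall_pos_le_add fun ε hε hfin => ?_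
    obtain ⟨n, hn⟩ := ENNReal.exists_inv_nat_lt (show (ε : ℝ≥0∞) ≠ 0 by
      exact_mod_cast hε.ne')
    calc μ (range f) ≤ μ (K n) + (n : ℝ≥0∞)⁻¹ := hKle n
    _ ≤ μ C + ε := add_le_add (measure_mono (subset_iUnion K n)) hn.le
  set B := toMeasurable μ (range f) with hB
  have hBnull : μ (B \ C) = 0 := by
    rw [measure_diff (hCA.trans (subset_toMeasurable _ _)) hCmeas.nullMeasurableSet
      (measure_ne_top μ C), measure_toMeasurable]
    exact tsub_eq_zero_of_le hle
  have : range f = C ∪ (range f \ C) := (union_diff_cancel' (le_refl C) hCA).symm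
  rw [this]
  exact hCmeas.nullMeasurableSet.union (NullMeasurableSet.of_null
    (measure_mono_null (diff_subset_diff_left (subset_toMeasurable _ _)) hBnull))

/-- Every set in the product σ-algebra is the preimage of a Borel set in
Cantor space × ℝ≥0 under a Marczewski-type coding map. -/
lemma exists_coding {Ω : Type*} {F : MeasurableSpace Ω}
    (S : Set (Ω × ℝ≥0)) (hS : MeasurableSet S) :
    ∃ (f : Ω → (ℕ → Bool)) (T : Set ((ℕ → Bool) × ℝ≥0)),
      Measurable f ∧ MeasurableSet T ∧ S = (fun p => (f p.1, p.2)) ⁻¹' T := by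
  classical
  set good : Set (Ω × ℝ≥0) → Prop := fun S =>
    ∃ (f : Ω → (ℕ → Bool)) (T : Set ((ℕ → Bool) × ℝ≥0)),
      Measurable f ∧ MeasurableSet T ∧ S = (fun p => (f p.1, p.2)) ⁻¹' T with hgood
  let m' : MeasurableSpace (Ω × ℝ≥0) :=
    { MeasurableSet' := good
      measurableSet_empty := ⟨fun _ _ => false, ∅, measurable_const, MeasurableSet.empty,
        by simp⟩
      measurableSet_compl := by
        rintro s ⟨f, T, hf, hT, rfl⟩
        exact ⟨f, Tᶜ, hf, hT.compl, rfl⟩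
      measurableSet_iUnion := by
        rintro s hs
        choose f T hf hT hsT using hs
        refine ⟨fun ω m => f m.unpair.1 ω m.unpair.2,
          ⋃ n, (fun p => (fun j => p.1 (Nat.pair n j), p.2)) ⁻¹' T n, ?_, ?_, ?_⟩
        · rw [measurable_pi_iff]
          exact fun m => (measurable_pi_apply _).comp (hf _)
        · refine MeasurableSet.iUnion fun n => (hT n).preimage ?_
          refine Measurable.prodMk ?_ measurable_snd
          rw [measurable_pi_iff]
          exact fun j => (measurable_pi_apply _).comp measurable_fst
        · ext p
          simp only [mem_iUnion, mem_preimage, hsT]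
          constructor
          · rintro ⟨n, hn⟩
            refine ⟨n, ?_⟩
            convert hn using 2
            ext j
            simp [Nat.unpair_pair]
          · rintro ⟨n, hn⟩
            refine ⟨n, ?_⟩
            convert hn using 2
            ext j
            simp [Nat.unpair_pair] }
  have hle : (Prod.instMeasurableSpace : MeasurableSpace (Ω × ℝ≥0)) ≤ m' := by
    rw [show (Prod.instMeasurableSpace : MeasurableSpace (Ω × ℝ≥0))
      = F.comap Prod.fst ⊔ (inferInstance : MeasurableSpace ℝ≥0).comap Prod.snd from rfl]
    refine sup_le ?_ ?_
    · rintro s ⟨s', hs', rfl⟩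
      refine ⟨fun ω _ => decide (ω ∈ s'), {p | p.1 0 = true}, ?_, ?_, ?_⟩
      · rw [measurable_pi_iff]
        intro j
        refine measurable_to_bool ?_
        have : (fun x => decide (x ∈ s')) ⁻¹' {true} = s' := by ext ω; simp
        rwa [this]
      · show MeasurableSet ((fun p : (ℕ → Bool) × ℝ≥0 => p.1 0) ⁻¹' {true})
        exact ((measurable_pi_apply 0).comp measurable_fst) (MeasurableSet.singleton true)
      · ext p; simp
    · rintro s ⟨t', ht', rfl⟩
      exact ⟨fun _ _ => false, Prod.snd ⁻¹' t', measurable_const,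
        ht'.preimage measurable_snd, rfl⟩
  exact hle S hS

/-- Measurable Projection Theorem: over a complete probability space,
the projection onto `Ω` of any `S ∈ F ⊗ B(ℝ₊)` belongs to `F`. -/
theorem measurable_projection {Ω : Type*} {F : MeasurableSpace Ω}
    (P : Measure Ω) [IsProbabilityMeasure P] (hc : P.IsComplete)
    (S : Set (Ω × ℝ≥0)) (hS : MeasurableSet S) :
    MeasurableSet (Prod.fst '' S) := by
  obtain ⟨f, T, hf, hT, rfl⟩ := exists_coding S hS
  have himg : Prod.fst '' ((fun p : Ω × ℝ≥0 => (f p.1, p.2)) ⁻¹' T)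
      = f ⁻¹' (Prod.fst '' T) := by
    ext ω
    simp only [mem_image, mem_preimage]
    constructor
    · rintro ⟨⟨ω', t⟩, hp, rfl⟩
      exact ⟨(f ω', t), hp, rfl⟩
    · rintro ⟨⟨y, t⟩, hp, h⟩
      have h' : y = f ω := h
      exact ⟨(ω, t), h' ▸ hp, rfl⟩
  rw [himg]
  have hA : AnalyticSet (Prod.fst '' T) := hT.analyticSet_image measurable_fst
  set μ := P.map f with hμ
  haveI : IsProbabilityMeasure μ := Measure.isProbabilityMeasure_map hf.aemeasurable
  haveI : PolishSpace (ℕ → Bool) := {}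
  obtain ⟨B, hB, hAB⟩ := analyticSet_nullMeasurableSet μ hA
  rw [MeasureTheory.ae_eq_set] at hAB
  obtain ⟨h1, h2⟩ := hAB
  have hnull : ∀ (D : Set (ℕ → Bool)), μ D = 0 → P (f ⁻¹' D) = 0 := by
    intro D hD
    have : f ⁻¹' D ⊆ f ⁻¹' (toMeasurable μ D) :=
      preimage_mono (subset_toMeasurable _ _)
    refine le_antisymm (le_trans (measure_mono this) ?_) zero_le
    rw [← Measure.map_apply hf (measurableSet_toMeasurable _ _), ← hμ,
      measure_toMeasurable, hD]
  have hd1 : MeasurableSet (f ⁻¹' (Prod.fst '' T) \ f ⁻¹' B) := by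
    apply hc.out
    refine measure_mono_null (t := f ⁻¹' (Prod.fst '' T \ B)) (by rw [preimage_diff]) ?_
    exact hnull _ h1
  have hd2 : MeasurableSet (f ⁻¹' B \ f ⁻¹' (Prod.fst '' T)) := by
    apply hc.out
    refine measure_mono_null (t := f ⁻¹' (B \ Prod.fst '' T)) (by rw [preimage_diff]) ?_
    exact hnull _ h2
  have : f ⁻¹' (Prod.fst '' T)
      = ((f ⁻¹' B) ∪ (f ⁻¹' (Prod.fst '' T) \ f ⁻¹' B)) \ (f ⁻¹' B \ f ⁻¹' (Prod.fst '' T)) := by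
    ext ω
    by_cases h1 : ω ∈ f ⁻¹' (Prod.fst '' T) <;> by_cases h2 : ω ∈ f ⁻¹' B <;>
      simp [h1, h2]
  rw [this]
  exact ((hB.preimage hf).union hd1).diff hd2
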